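/- If the signature of a cubic girth-regular graph of finite girth is (0, b, c) with b ≤ c (i.e., some edge at each vertex lies on no girth cycle), then b = c = 1. -/

import Mathlib

open SimpleGraph

/-- `s` is the edge set of some cycle of length `g` in `G`. -/
def IsGirthCycleEdgeSet {V : Type*} (G : SimpleGraph V) (g : ℕ) (s : Set (Sym2 V)) : Prop :=
  ∃ (u : V) (w : G.Walk u u), w.IsCycle ∧ w.length = g ∧ s = {e | e ∈ w.edges}

/-- The number of cycles of length `g` in `G` that contain the edge `e`. -/
noncomputable def girthCycleCount {V : Type*} (G : SimpleGraph V) (g : ℕ) (e : Sym2 V) : ℕ :=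
  Set.ncard {s : Set (Sym2 V) | IsGirthCycleEdgeSet G g s ∧ e ∈ s}

/-- The multiset of the numbers of `g`-cycles through the edges incident to `v`. -/
noncomputable def vertexSignature {V : Type*} [Fintype V] (G : SimpleGraph V) (g : ℕ)
    (v : V) : Multiset ℕ :=
  ((G.neighborSet v).toFinite.toFinset.val).map fun u => girthCycleCount G g s(v, u)

/-- Every non-nil walk has an edge incident to its final vertex. -/
lemma exists_last_edge {V : Type*} {G : SimpleGraph V} {z v : V} (p : G.Walk z v)
    (hp : ¬ p.Nil) : ∃ y, s(y, v) ∈ p.edges := by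
  induction p with
  | nil => simp at hp
  | @cons a b d h q ih =>
    by_cases hq : q.Nil
    · have hbd : b = d := hq.eq
      subst hbd
      exact ⟨a, by simp⟩
    · obtain ⟨y, hy⟩ := ih hq
      exact ⟨y, by simp [hy]⟩

/-- Any vertex incident to an edge of a cycle is incident to a second edge of the cycle. -/
lemma two_edges {V : Type*} {G : SimpleGraph V} {u : V} {w : G.Walk u u} (hw : w.IsCycle)
    {v x : V} (hvx : s(v, x) ∈ w.edges) : ∃ y, y ≠ x ∧ s(v, y) ∈ w.edges := by
  classical
  have hv : v ∈ w.support := w.fst_mem_support_of_mem_edges hvx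
  obtain ⟨c, hc, hmem⟩ : ∃ c : G.Walk v v, c.IsCycle ∧ ∀ e, e ∈ c.edges ↔ e ∈ w.edges :=
    ⟨w.rotate v hv, hw.rotate hv, fun e => (w.rotate_edges v hv).mem_iff⟩
  cases c with
  | nil => exact (hc.isCircuit.ne_nil rfl).elim
  | @cons _ z _ h p =>
    rw [Walk.cons_isCycle_iff] at hc
    have hpnil : ¬ p.Nil := Walk.not_nil_of_ne h.ne'
    obtain ⟨y, hy⟩ := exists_last_edge p hpnil
    have hyz : y ≠ z := by
      rintro rfl
      exact hc.2 (by rwa [Sym2.eq_swap] at hy)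
    by_cases hx : x = z
    · subst hx
      refine ⟨y, hyz, ?_⟩
      rw [← hmem]
      simp only [Walk.edges_cons, List.mem_cons]
      right; rwa [Sym2.eq_swap]
    · refine ⟨z, fun hzx => hx hzx.symm, ?_⟩
      rw [← hmem]
      simp

/-- Two distinct members of a multiset both mapped to `1` give count at least two. -/
lemma two_le_count {α : Type*} {m : Multiset α} {x y : α} (hx : x ∈ m) (hy : y ∈ m)
    (hxy : x ≠ y) {f : α → ℕ} (hfx : f x = 1) (hfy : f y = 1) :
    2 ≤ Multiset.count 1 (m.map f) := by
  obtain ⟨m1, rfl⟩ := Multiset.exists_cons_of_mem hx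
  have hy1 : y ∈ m1 := by
    rcases Multiset.mem_cons.mp hy with h | h
    · exact absurd h.symm hxy
    · exact h
  obtain ⟨m2, rfl⟩ := Multiset.exists_cons_of_mem hy1
  simp [Multiset.count_cons, hfx, hfy]

/-- If a cubic girth-regular graph of finite girth has signature
`(0, b, c)` with `b ≤ c`, then `b = c = 1`. -/
theorem stmt8 {V : Type*} [Fintype V] (G : SimpleGraph V) [DecidableRel G.Adj]
    (g : ℕ) (hreg : G.IsRegularOfDegree 3) (hg : G.egirth = (g : ℕ∞))
    (b c : ℕ) (hbc : b ≤ c)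
    (hsig : ∀ v : V, vertexSignature G g v = {0, b, c}) :
    b = 1 ∧ c = 1 := by
  classical
  have hfin : ∀ e : Sym2 V, {s : Set (Sym2 V) | IsGirthCycleEdgeSet G g s ∧ e ∈ s}.Finite :=
    fun e => Set.toFinite _
  have hpos : ∀ (S : Set (Sym2 V)) (e : Sym2 V), IsGirthCycleEdgeSet G g S → e ∈ S →
      1 ≤ girthCycleCount G g e := by
    intro S e hS he
    exact (Set.ncard_pos (hfin e)).mpr ⟨S, hS, he⟩
  -- existence of a girth cycle
  have hgne : ¬ G.IsAcyclic := by
    intro h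
    have : (g : ℕ∞) = ⊤ := by rw [← hg, h.egirth_eq_top]
    simp at this
  obtain ⟨a, w0, hw0, hlen0⟩ := exists_egirth_eq_length.mpr hgne
  have hlen0' : w0.length = g := by
    rw [hg] at hlen0
    exact_mod_cast hlen0.symm
  -- the zero edge at every vertex
  have hzero : ∀ v : V, ∃ u₀, G.Adj v u₀ ∧ girthCycleCount G g s(v, u₀) = 0 := by
    intro v
    have h0 : (0 : ℕ) ∈ vertexSignature G g v := by rw [hsig v]; simp
    unfold vertexSignature at h0
    obtain ⟨u₀, hu₀, hfu⟩ := Multiset.mem_map.mp h0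
    refine ⟨u₀, ?_, hfu⟩
    have := (Set.Finite.mem_toFinset _).mp (Finset.mem_val.mp hu₀)
    exact this
  -- the key local lemma
  have hkey : ∀ (v u₁ u₂ z : V), u₁ ≠ u₂ → G.Adj v u₁ → G.Adj v u₂ → G.Adj v z →
      1 ≤ girthCycleCount G g s(v, u₁) → 1 ≤ girthCycleCount G g s(v, u₂) →
      1 ≤ girthCycleCount G g s(v, z) → z = u₁ ∨ z = u₂ := by
    intro v u₁ u₂ z hne h1 h2 hz c1 c2 cz
    by_contra hcon
    push_neg at hcon
    obtain ⟨hz1, hz2⟩ := hcon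
    obtain ⟨u₀, h0adj, h0⟩ := hzero v
    have n01 : u₀ ≠ u₁ := by rintro rfl; omega
    have n02 : u₀ ≠ u₂ := by rintro rfl; omega
    have n0z : u₀ ≠ z := by rintro rfl; omega
    have hsub : ({u₀, u₁, u₂, z} : Finset V) ⊆ G.neighborFinset v := by
      intro t ht
      simp only [Finset.mem_insert, Finset.mem_singleton] at ht
      rcases ht with rfl | rfl | rfl | rfl <;> simpa [mem_neighborFinset]
    have h1z : u₁ ≠ z := fun h => hz1 h.symm
    have h2z : u₂ ≠ z := fun h => hz2 h.symm
    have hc4 : ({u₀, u₁, u₂, z} : Finset V).card = 4 := by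
      rw [Finset.card_insert_of_notMem (by simp [n01, n02, n0z]),
        Finset.card_insert_of_notMem (by simp [hne, h1z]),
        Finset.card_insert_of_notMem (by simp [h2z]),
        Finset.card_singleton]
    have hle := Finset.card_le_card hsub
    have hdeg : (G.neighborFinset v).card = 3 := hreg v
    omega
  -- uniqueness of the girth cycle through an edge
  have huniq : ∀ S S' : Set (Sym2 V), IsGirthCycleEdgeSet G g S → IsGirthCycleEdgeSet G g S' →
      ∀ e, e ∈ S → e ∈ S' → S = S' := by
    intro S S' hS hS' e heS heS'
    obtain ⟨u, w, hw, hwl, rfl⟩ := hS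
    obtain ⟨u', w', hw', hwl', rfl⟩ := hS'
    simp only [Set.mem_setOf_eq] at heS heS'
    have prop : ∀ (x y : V) (p : G.Walk x y), (∀ f ∈ p.edges, f ∈ w'.edges) →
        (∃ t₁ t₂, t₁ ≠ t₂ ∧ s(x, t₁) ∈ w.edges ∧ s(x, t₂) ∈ w.edges) →
        ∀ f ∈ p.edges, f ∈ w.edges := by
      intro x y p
      induction p with
      | nil => intro _ _ f hf; simp at hf
      | @cons a' b' d' h q ih =>
        intro hsub hQ f hf
        have h1 : s(a', b') ∈ w'.edges := hsub _ (by simp)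
        obtain ⟨t₁, t₂, ht, he1, he2⟩ := hQ
        have hfirst : s(a', b') ∈ w.edges := by
          have adj1 : G.Adj a' t₁ := w.adj_of_mem_edges he1
          have adj2 : G.Adj a' t₂ := w.adj_of_mem_edges he2
          have cb : 1 ≤ girthCycleCount G g s(a', b') :=
            hpos _ _ ⟨u', w', hw', hwl', rfl⟩ h1
          have cc1 : 1 ≤ girthCycleCount G g s(a', t₁) :=
            hpos _ _ ⟨u, w, hw, hwl, rfl⟩ he1
          have cc2 : 1 ≤ girthCycleCount G g s(a', t₂) :=
            hpos _ _ ⟨u, w, hw, hwl, rfl⟩ he2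
          rcases hkey a' t₁ t₂ b' ht adj1 adj2 h cc1 cc2 cb with h' | h'
          · rw [h']; exact he1
          · rw [h']; exact he2
        simp only [Walk.edges_cons, List.mem_cons] at hf
        rcases hf with rfl | hf
        · exact hfirst
        · have hQb : ∃ t₁' t₂', t₁' ≠ t₂' ∧ s(b', t₁') ∈ w.edges ∧ s(b', t₂') ∈ w.edges := by
            have hba : s(b', a') ∈ w.edges := by rwa [Sym2.eq_swap] at hfirst
            obtain ⟨t, htne, htmem⟩ := two_edges hw hba
            exact ⟨a', t, fun h' => htne h'.symm, hba, htmem⟩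
          exact ih (fun f' hf' => hsub f' (by simp [hf'])) hQb f hf
    revert heS heS'
    induction e using Sym2.ind with
    | _ ex ey =>
      intro heS heS'
      have hxs : ex ∈ w'.support := w'.fst_mem_support_of_mem_edges heS'
      have hrot := w'.rotate_edges ex hxs
      have hQ : ∃ t₁ t₂, t₁ ≠ t₂ ∧ s(ex, t₁) ∈ w.edges ∧ s(ex, t₂) ∈ w.edges := by
        obtain ⟨t, htne, htm⟩ := two_edges hw heS
        exact ⟨t, ey, htne, htm, heS⟩
      have hsubset : ∀ f ∈ w'.edges, f ∈ w.edges := by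
        intro f hf
        exact prop ex ex (w'.rotate ex hxs) (fun f' hf' => hrot.mem_iff.mp hf') hQ f
          (hrot.mem_iff.mpr hf)
      have h1 : {e : Sym2 V | e ∈ w'.edges} ⊆ {e : Sym2 V | e ∈ w.edges} := hsubset
      have hcards : ∀ (v'' : V) (w'' : G.Walk v'' v''), w''.IsCycle → w''.length = g →
          Set.ncard {e : Sym2 V | e ∈ w''.edges} = g := by
        intro v'' w'' hw'' hwl''
        have hset : {e : Sym2 V | e ∈ w''.edges} = ↑w''.edges.toFinset := by
          ext f; simp
        rw [hset, Set.ncard_coe_finset,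
          List.toFinset_card_of_nodup hw''.isCircuit.isTrail.edges_nodup,
          Walk.length_edges, hwl'']
      exact (Set.eq_of_subset_of_ncard_le h1
        (by rw [hcards u w hw hwl, hcards u' w' hw' hwl']) (Set.toFinite _)).symm
  -- every edge on a girth cycle lies on exactly one girth cycle
  have hone : ∀ (S : Set (Sym2 V)) (e : Sym2 V), IsGirthCycleEdgeSet G g S → e ∈ S →
      girthCycleCount G g e = 1 := by
    intro S e hS he
    have hset : {s : Set (Sym2 V) | IsGirthCycleEdgeSet G g s ∧ e ∈ s} = {S} := by
      ext s
      simp only [Set.mem_setOf_eq, Set.mem_singleton_iff]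
      constructor
      · rintro ⟨h1, h2⟩; exact huniq s S h1 hS e h2 he
      · rintro rfl; exact ⟨hS, he⟩
    rw [girthCycleCount, hset, Set.ncard_singleton]
  -- pick a vertex on the girth cycle
  have hw0nil : ¬ w0.Nil := by
    rw [Walk.not_nil_iff_lt_length]
    have := hw0.three_le_length
    omega
  obtain ⟨y0, hy0⟩ := exists_last_edge w0 hw0nil
  have hy0' : s(a, y0) ∈ w0.edges := by rwa [Sym2.eq_swap] at hy0
  obtain ⟨t0, ht0ne, ht0⟩ := two_edges hw0 hy0'
  have hS0 : IsGirthCycleEdgeSet G g {e : Sym2 V | e ∈ w0.edges} := ⟨a, w0, hw0, hlen0', rfl⟩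
  have hc1 : girthCycleCount G g s(a, y0) = 1 := hone _ _ hS0 hy0'
  have hc2 : girthCycleCount G g s(a, t0) = 1 := hone _ _ hS0 ht0
  have hadj1 : G.Adj a y0 := w0.adj_of_mem_edges hy0'
  have hadj2 : G.Adj a t0 := w0.adj_of_mem_edges ht0
  have hy0m : y0 ∈ ((G.neighborSet a).toFinite.toFinset).val :=
    Finset.mem_val.mpr ((Set.Finite.mem_toFinset _).mpr hadj1)
  have ht0m : t0 ∈ ((G.neighborSet a).toFinite.toFinset).val :=
    Finset.mem_val.mpr ((Set.Finite.mem_toFinset _).mpr hadj2)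
  have hcount : 2 ≤ Multiset.count 1 (vertexSignature G g a) := by
    unfold vertexSignature
    exact two_le_count hy0m ht0m (fun h => ht0ne h.symm) hc1 hc2
  rw [hsig a] at hcount
  rw [show ({0, b, c} : Multiset ℕ) = 0 ::ₘ b ::ₘ c ::ₘ 0 from rfl,
    Multiset.count_cons, Multiset.count_cons, Multiset.count_cons,
    Multiset.count_zero] at hcount
  split_ifs at hcount <;> first | exact False.elim ‹False› | omega
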